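/- arXiv:2303.08500 — 2 statements merged into one kernel-verified Lean document; each statement's English description precedes it below -/
import Mathlib

section
/- Let h : R^d × ℕ → R^d satisfy ‖h(x,t) − h(y,t)‖ ≤ λ_t‖x − y‖ for all x, y with λ_t ∈ [0,1), let σ : R^d × ℕ → R satisfy σ(x,t)²·d ≤ C_t, and let ε_t, ε_t' ~ N(0, I_d) be independent of the current states. If x_{t−1} = h(x_t, t) + σ(x_t, t)·ε_t and x̄_{t−1} = h(x̄_t, t) + σ(x̄_t, t)·ε_t', then E[‖x_{t−1} − x̄_{t−1}‖²] ≤ λ_t²·E[‖x_t − x̄_t‖²] + 2C_t. -/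
open MeasureTheory ProbabilityTheory Real
open scoped NNReal ENNReal

lemma SCS.gauss_integral_eq (g : ℝ → ℝ) :
    ∫ x, g x ∂(gaussianReal 0 1) = ∫ x, gaussianPDFReal 0 1 x * g x := by
  rw [gaussianReal_of_var_ne_zero 0 one_ne_zero]
  have h1 : (volume.withDensity (gaussianPDF 0 1))
      = volume.withDensity (fun x => ((gaussianPDFReal 0 1 x).toNNReal : ℝ≥0∞)) := rfl
  rw [h1, integral_withDensity_eq_integral_smul (measurable_gaussianPDFReal 0 1).real_toNNReal]
  congr 1
  ext x
  rw [NNReal.smul_def, smul_eq_mul, Real.coe_toNNReal _ (gaussianPDFReal_nonneg _ _ _)]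

lemma SCS.pdf01 (x : ℝ) :
    gaussianPDFReal 0 1 x = (Real.sqrt (2 * π))⁻¹ * Real.exp (-(1/2) * x ^ 2) := by
  simp only [gaussianPDFReal, NNReal.coe_one, mul_one, sub_zero]
  ring_nf

lemma SCS.int_x_exp : Integrable (fun x : ℝ => x * Real.exp (-(1/2) * x ^ 2)) :=
  integrable_mul_exp_neg_mul_sq (by norm_num)

lemma SCS.int_sq_exp : Integrable (fun x : ℝ => x ^ 2 * Real.exp (-(1/2) * x ^ 2)) := by
  have h := integrable_rpow_mul_exp_neg_mul_sq (b := 1/2) (by norm_num) (s := 2) (by norm_num)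
  have : ∀ x : ℝ, x ^ (2:ℝ) = x ^ 2 := fun x => by
    rw [show (2:ℝ) = ((2:ℕ):ℝ) by norm_num, Real.rpow_natCast]
  simpa [this] using h

lemma SCS.gauss_mean : ∫ x, x ∂(gaussianReal 0 1) = 0 := by
  rw [SCS.gauss_integral_eq]
  have hodd := integral_neg_eq_self (fun x => gaussianPDFReal 0 1 x * x) volume
  have heq : ∀ x : ℝ, gaussianPDFReal 0 1 (-x) * (-x) = -(gaussianPDFReal 0 1 x * x) := by
    intro x
    simp only [SCS.pdf01, neg_sq]
    ring
  rw [show (fun x => gaussianPDFReal 0 1 (-x) * (-x)) = fun x => -(gaussianPDFReal 0 1 x * x)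
    from funext heq, integral_neg] at hodd
  linarith

lemma SCS.rpow_two_eq (x : ℝ) : x ^ (2:ℝ) = x ^ 2 := by
  rw [show (2:ℝ) = ((2:ℕ):ℝ) by norm_num, Real.rpow_natCast]

lemma SCS.gauss_sq : ∫ x, x ^ 2 ∂(gaussianReal 0 1) = 1 := by
  rw [SCS.gauss_integral_eq]
  have hre : (fun x : ℝ => gaussianPDFReal 0 1 x * x ^ 2)
      = fun x => (Real.sqrt (2 * π))⁻¹ * (x ^ 2 * Real.exp (-(1/2) * x ^ 2)) := by
    funext x; rw [SCS.pdf01]; ring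
  rw [hre, integral_const_mul]
  have h1 : (∫ x : ℝ, x ^ 2 * Real.exp (-(1/2) * x ^ 2))
      = 2 * ∫ x in Set.Ioi (0:ℝ), x ^ 2 * Real.exp (-(1/2) * x ^ 2) := by
    rw [← integral_comp_abs (f := fun y : ℝ => y ^ 2 * Real.exp (-(1/2) * y ^ 2))]
    congr 1; funext x; rw [sq_abs]
  have h2 := integral_rpow_mul_exp_neg_mul_rpow (p := 2) (q := 2) (b := 1/2)
    (by norm_num) (by norm_num) (by norm_num)
  simp only [SCS.rpow_two_eq] at h2
  have hGamma : Real.Gamma ((2 + 1) / 2 : ℝ) = Real.sqrt π / 2 := by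
    rw [show ((2:ℝ) + 1) / 2 = 1/2 + 1 by norm_num, Real.Gamma_add_one (by norm_num),
      Real.Gamma_one_half_eq]
    ring
  have hpow : ((1:ℝ)/2) ^ (-((2:ℝ) + 1) / 2) = 2 * Real.sqrt 2 := by
    rw [show ((1:ℝ)/2) = 2⁻¹ by norm_num, show (-((2:ℝ)+1))/2 = -((3:ℝ)/2) by norm_num,
      Real.inv_rpow (by norm_num), Real.rpow_neg (by norm_num), inv_inv,
      show ((3:ℝ)/2) = 1 + 1/2 by norm_num, Real.rpow_add (by norm_num), Real.rpow_one,
      ← Real.sqrt_eq_rpow]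
  rw [h1, h2, hGamma, hpow]
  rw [Real.sqrt_mul (by norm_num) π]
  have hs2 : Real.sqrt 2 ≠ 0 := by positivity
  have hsp : Real.sqrt π ≠ 0 := by positivity
  field_simp

lemma SCS.gauss_sq_int : Integrable (fun x : ℝ => x ^ 2) (gaussianReal 0 1) := by
  rw [gaussianReal_of_var_ne_zero 0 one_ne_zero]
  rw [integrable_withDensity_iff (measurable_gaussianPDF 0 1)
    (ae_of_all _ fun x => ENNReal.ofReal_lt_top)]
  have : (fun x : ℝ => x ^ 2 * (gaussianPDF 0 1 x).toReal)
      = fun x => (Real.sqrt (2 * π))⁻¹ * (x ^ 2 * Real.exp (-(1/2) * x ^ 2)) := by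
    funext x
    rw [gaussianPDF, ENNReal.toReal_ofReal (gaussianPDFReal_nonneg _ _ _), SCS.pdf01]
    ring
  rw [this]
  exact SCS.int_sq_exp.const_mul _

lemma SCS.gauss_memL2 : MemLp (id : ℝ → ℝ) 2 (gaussianReal 0 1) :=
  (memLp_two_iff_integrable_sq aestronglyMeasurable_id).mpr SCS.gauss_sq_int

lemma SCS.noise_facts {Ω : Type*} [MeasurableSpace Ω] {P : Measure Ω} {e : Ω → ℝ}
    (me : Measurable e) (hmap : Measure.map e P = gaussianReal 0 1) :
    MemLp e 2 P ∧ (∫ ω, e ω ∂P) = 0 ∧ (∫ ω, (e ω) ^ 2 ∂P) = 1 := by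
  have hL2 : MemLp e 2 P := by
    have := (memLp_map_measure_iff (f := e) (g := (id : ℝ → ℝ))
      (by rw [hmap]; exact aestronglyMeasurable_id) me.aemeasurable).mp
      (by rw [hmap]; exact SCS.gauss_memL2)
    simpa [Function.comp] using this
  refine ⟨hL2, ?_, ?_⟩
  · have := integral_map (μ := P) me.aemeasurable (f := (fun x : ℝ => x))
      (by rw [hmap]; exact aestronglyMeasurable_id)
    rw [hmap, SCS.gauss_mean] at this
    exact this.symm
  · have := integral_map (μ := P) me.aemeasurable (f := (fun x : ℝ => x ^ 2))
      (by rw [hmap]; exact (measurable_id.pow_const 2).aestronglyMeasurable)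
    rw [hmap, SCS.gauss_sq] at this
    exact this.symm

lemma SCS.int_mul {Ω : Type*} [MeasurableSpace Ω] {P : Measure Ω} {f g : Ω → ℝ}
    (hf : MemLp f 2 P) (hg : MemLp g 2 P) : Integrable (fun ω => f ω * g ω) P := by
  refine (hf.integrable_sq.add hg.integrable_sq).mono' (hf.1.mul hg.1) (ae_of_all _ fun ω => ?_)
  simp only [Pi.add_apply]
  rw [Real.norm_eq_abs, abs_mul]
  nlinarith [sq_nonneg (|f ω| - |g ω|), sq_abs (f ω), sq_abs (g ω),
    abs_nonneg (f ω), abs_nonneg (g ω)]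

lemma SCS.memL2_bdd_mul {Ω : Type*} [MeasurableSpace Ω] {P : Measure Ω} {s e : Ω → ℝ}
    (hs : AEStronglyMeasurable s P) {K : ℝ} (hb : ∀ ω, |s ω| ≤ K) (he : MemLp e 2 P) :
    MemLp (fun ω => s ω * e ω) 2 P := by
  refine (he.const_mul K).of_le (hs.mul he.1) (ae_of_all _ fun ω => ?_)
  rw [Real.norm_eq_abs, Real.norm_eq_abs, abs_mul, abs_mul]
  have hK : 0 ≤ K := le_trans (abs_nonneg _) (hb ω)
  calc |s ω| * |e ω| ≤ K * |e ω| := by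
        exact mul_le_mul_of_nonneg_right (hb ω) (abs_nonneg _)
    _ ≤ |K| * |e ω| := by
        exact mul_le_mul_of_nonneg_right (le_abs_self K) (abs_nonneg _)

lemma SCS.coord_le_norm {d : ℕ} (v : EuclideanSpace ℝ (Fin d)) (j : Fin d) : |v j| ≤ ‖v‖ := by
  rw [EuclideanSpace.norm_eq, ← Real.sqrt_sq_eq_abs]
  apply Real.sqrt_le_sqrt
  have : |v j| ^ 2 ≤ ∑ i, ‖v i‖ ^ 2 := by
    have := Finset.single_le_sum (f := fun i => ‖v i‖ ^ 2) (fun i _ => sq_nonneg _)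
      (Finset.mem_univ j)
    simpa [Real.norm_eq_abs] using this
  simpa [sq_abs] using this

lemma SCS.key {Ω : Type*} [MeasurableSpace Ω] {P : Measure Ω} [IsProbabilityMeasure P]
    {a s1 s2 e e' : Ω → ℝ}
    (ha : MemLp a 2 P) (hb : MemLp (fun ω => s1 ω * e ω) 2 P)
    (hc : MemLp (fun ω => s2 ω * e' ω) 2 P)
    (hs1m : AEStronglyMeasurable s1 P) (hs2m : AEStronglyMeasurable s2 P)
    (hem : AEStronglyMeasurable e P) (he'm : AEStronglyMeasurable e' P)
    (hmean : ∫ ω, e ω ∂P = 0) (hmean' : ∫ ω, e' ω ∂P = 0)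
    (hsq : ∫ ω, e ω * e ω ∂P = 1) (hsq' : ∫ ω, e' ω * e' ω ∂P = 1)
    (h1 : IndepFun (fun ω => a ω * s1 ω) e P)
    (h2 : IndepFun (fun ω => a ω * s2 ω) e' P)
    (h3 : IndepFun (fun ω => s1 ω * s2 ω) (fun ω => e ω * e' ω) P)
    (h4 : IndepFun (fun ω => s1 ω * s1 ω) (fun ω => e ω * e ω) P)
    (h5 : IndepFun (fun ω => s2 ω * s2 ω) (fun ω => e' ω * e' ω) P)
    (h6 : IndepFun e e' P) :
    ∫ ω, (a ω + s1 ω * e ω - s2 ω * e' ω) ^ 2 ∂P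
      = (∫ ω, a ω ^ 2 ∂P) + (∫ ω, s1 ω * s1 ω ∂P) + (∫ ω, s2 ω * s2 ω ∂P) := by
  have Ia := ha.integrable_sq
  have Ib := hb.integrable_sq
  have Ic := hc.integrable_sq
  have Iab := SCS.int_mul ha hb
  have Iac := SCS.int_mul ha hc
  have Ibc := SCS.int_mul hb hc
  have hring : (fun ω => (a ω + s1 ω * e ω - s2 ω * e' ω) ^ 2)
      = fun ω => ((((a ω ^ 2 + (s1 ω * e ω) ^ 2) + (s2 ω * e' ω) ^ 2)
          + 2 * (a ω * (s1 ω * e ω)) - 2 * (a ω * (s2 ω * e' ω)))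
          - 2 * ((s1 ω * e ω) * (s2 ω * e' ω))) := funext fun ω => by ring
  have hab : ∫ ω, a ω * (s1 ω * e ω) ∂P = 0 := by
    have hw : (fun ω => a ω * (s1 ω * e ω)) = fun ω => (a ω * s1 ω) * e ω :=
      funext fun ω => by ring
    rw [hw, h1.integral_fun_mul_eq_mul_integral (ha.1.mul hs1m) hem, hmean, mul_zero]
  have hac : ∫ ω, a ω * (s2 ω * e' ω) ∂P = 0 := by
    have hw : (fun ω => a ω * (s2 ω * e' ω)) = fun ω => (a ω * s2 ω) * e' ω :=
      funext fun ω => by ring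
    rw [hw, h2.integral_fun_mul_eq_mul_integral (ha.1.mul hs2m) he'm, hmean', mul_zero]
  have hbc : ∫ ω, (s1 ω * e ω) * (s2 ω * e' ω) ∂P = 0 := by
    have h6' : ∫ ω, e ω * e' ω ∂P = 0 := by
      rw [h6.integral_fun_mul_eq_mul_integral hem he'm, hmean, zero_mul]
    have hw : (fun ω => (s1 ω * e ω) * (s2 ω * e' ω))
        = fun ω => (s1 ω * s2 ω) * (e ω * e' ω) := funext fun ω => by ring
    rw [hw, h3.integral_fun_mul_eq_mul_integral (hs1m.mul hs2m) (hem.mul he'm), h6', mul_zero]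
  have hb2 : ∫ ω, (s1 ω * e ω) ^ 2 ∂P = ∫ ω, s1 ω * s1 ω ∂P := by
    have hw : (fun ω => (s1 ω * e ω) ^ 2) = fun ω => (s1 ω * s1 ω) * (e ω * e ω) :=
      funext fun ω => by ring
    rw [hw, h4.integral_fun_mul_eq_mul_integral (hs1m.mul hs1m) (hem.mul hem), hsq, mul_one]
  have hc2 : ∫ ω, (s2 ω * e' ω) ^ 2 ∂P = ∫ ω, s2 ω * s2 ω ∂P := by
    have hw : (fun ω => (s2 ω * e' ω) ^ 2) = fun ω => (s2 ω * s2 ω) * (e' ω * e' ω) :=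
      funext fun ω => by ring
    rw [hw, h5.integral_fun_mul_eq_mul_integral (hs2m.mul hs2m) (he'm.mul he'm), hsq', mul_one]
  have I1 : Integrable (fun ω => a ω ^ 2 + (s1 ω * e ω) ^ 2) P := Ia.add Ib
  have I2 : Integrable (fun ω => a ω ^ 2 + (s1 ω * e ω) ^ 2 + (s2 ω * e' ω) ^ 2) P := I1.add Ic
  have I3 : Integrable (fun ω => a ω ^ 2 + (s1 ω * e ω) ^ 2 + (s2 ω * e' ω) ^ 2
      + 2 * (a ω * (s1 ω * e ω))) P := I2.add (Iab.const_mul 2)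
  have I4 : Integrable (fun ω => a ω ^ 2 + (s1 ω * e ω) ^ 2 + (s2 ω * e' ω) ^ 2
      + 2 * (a ω * (s1 ω * e ω)) - 2 * (a ω * (s2 ω * e' ω))) P := I3.sub (Iac.const_mul 2)
  rw [hring]
  rw [integral_sub I4 (Ibc.const_mul 2), integral_sub I3 (Iac.const_mul 2),
    integral_add I2 (Iab.const_mul 2), integral_add I1 Ic, integral_add Ia Ib,
    integral_const_mul, integral_const_mul, integral_const_mul, hab, hac, hbc, hb2, hc2]
  ring

lemma SCS.indep_comp {Ω β β' γ γ' : Type*} [MeasurableSpace Ω]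
    {mβ : MeasurableSpace β} {mβ' : MeasurableSpace β'}
    {mγ : MeasurableSpace γ} {mγ' : MeasurableSpace γ'}
    {f : Ω → β} {g : Ω → β'} {μ : Measure Ω}
    (hfg : IndepFun f g μ) {φ : β → γ} {ψ : β' → γ'}
    (hφ : Measurable φ) (hψ : Measurable ψ) :
    IndepFun (fun ω => φ (f ω)) (fun ω => ψ (g ω)) μ :=
  hfg.comp hφ hψ

/-- One-step contraction of a stochastic difference equation: if `h(·,t)` is a
`λ_t`-contraction with `λ_t ∈ [0,1)`, `σ(x,t)²·d ≤ C_t`, and `ε_t, ε_t'` are independent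
standard Gaussian vectors `N(0, I_d)` jointly independent of the current states, then for
`x_{t−1} = h(x_t,t) + σ(x_t,t)·ε_t` and `x̄_{t−1} = h(x̄_t,t) + σ(x̄_t,t)·ε_t'` we have
`E[‖x_{t−1} − x̄_{t−1}‖²] ≤ λ_t²·E[‖x_t − x̄_t‖²] + 2·C_t`. -/
theorem stochastic_contraction_step {Ω : Type*} [MeasureSpace Ω]
    (P : Measure Ω) [IsProbabilityMeasure P] {d : ℕ}
    (h : EuclideanSpace ℝ (Fin d) → ℕ → EuclideanSpace ℝ (Fin d))
    (σ : EuclideanSpace ℝ (Fin d) → ℕ → ℝ)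
    (t : ℕ) (lam C : ℝ) (hlam0 : 0 ≤ lam) (hlam1 : lam < 1) (hC : 0 ≤ C)
    (hmeash : Measurable fun x => h x t) (hmeasσ : Measurable fun x => σ x t)
    (hcontr : ∀ x y : EuclideanSpace ℝ (Fin d), ‖h x t - h y t‖ ≤ lam * ‖x - y‖)
    (hσ : ∀ x : EuclideanSpace ℝ (Fin d), (σ x t) ^ 2 * d ≤ C)
    (xt xbart : Ω → EuclideanSpace ℝ (Fin d))
    (hxt : MemLp xt 2 P) (hxbart : MemLp xbart 2 P)
    (εt εt' : Ω → EuclideanSpace ℝ (Fin d))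
    (hmeasε : Measurable εt) (hmeasε' : Measurable εt')
    (h_noise_indep : iIndepFun
      (Sum.elim (fun j ω => εt ω j) (fun j ω => εt' ω j) : Fin d ⊕ Fin d → Ω → ℝ) P)
    (h_law : ∀ j : Fin d, Measure.map (fun ω => εt ω j) P = gaussianReal 0 1)
    (h_law' : ∀ j : Fin d, Measure.map (fun ω => εt' ω j) P = gaussianReal 0 1)
    (h_indep_states : IndepFun (fun ω => (εt ω, εt' ω)) (fun ω => (xt ω, xbart ω)) P) :
    ∫ ω, ‖(h (xt ω) t + σ (xt ω) t • εt ω) -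
          (h (xbart ω) t + σ (xbart ω) t • εt' ω)‖ ^ 2 ∂P ≤
      lam ^ 2 * ∫ ω, ‖xt ω - xbart ω‖ ^ 2 ∂P + 2 * C := by
  rcases Nat.eq_zero_or_pos d with hd0 | hd0
  · subst hd0
    have hz : ∀ v : EuclideanSpace ℝ (Fin 0), ‖v‖ = 0 := fun v => by
      rw [EuclideanSpace.norm_eq]; simp
    simp only [hz]
    simp only [ne_eq, OfNat.ofNat_ne_zero, not_false_eq_true, zero_pow, integral_zero, mul_zero]
    positivity
  · have hd1 : (1:ℝ) ≤ (d:ℝ) := by exact_mod_cast hd0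
    have me : ∀ j : Fin d, Measurable (fun ω => εt ω j) := fun j =>
      ((measurable_pi_apply j).comp (WithLp.measurable_ofLp 2 _)).comp hmeasε
    have me' : ∀ j : Fin d, Measurable (fun ω => εt' ω j) := fun j =>
      ((measurable_pi_apply j).comp (WithLp.measurable_ofLp 2 _)).comp hmeasε'
    have hnf := fun j => SCS.noise_facts (me j) (h_law j)
    have hnf' := fun j => SCS.noise_facts (me' j) (h_law' j)
    have haeX : AEMeasurable xt P := hxt.1.aemeasurable
    have haeY : AEMeasurable xbart P := hxbart.1.aemeasurable
    have haeP : AEMeasurable (fun ω => (xt ω, xbart ω)) P := haeX.prodMk haeY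
    have mA : Measurable (fun p : EuclideanSpace ℝ (Fin d) × EuclideanSpace ℝ (Fin d) =>
        h p.1 t - h p.2 t) := (hmeash.comp measurable_fst).sub (hmeash.comp measurable_snd)
    have haA : AEMeasurable (fun ω => h (xt ω) t - h (xbart ω) t) P :=
      mA.comp_aemeasurable haeP
    have haAj : ∀ j : Fin d, AEMeasurable (fun ω => (h (xt ω) t - h (xbart ω) t) j) P :=
      fun j => ((measurable_pi_apply j).comp (WithLp.measurable_ofLp 2 _)).comp_aemeasurable haA
    have hs1m : AEStronglyMeasurable (fun ω => σ (xt ω) t) P :=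
      (hmeasσ.comp_aemeasurable haeX).aestronglyMeasurable
    have hs2m : AEStronglyMeasurable (fun ω => σ (xbart ω) t) P :=
      (hmeasσ.comp_aemeasurable haeY).aestronglyMeasurable
    have hσsq : ∀ x, (σ x t) ^ 2 ≤ C := fun x =>
      le_trans (le_mul_of_one_le_right (sq_nonneg _) hd1) (hσ x)
    have hσb : ∀ x, |σ x t| ≤ Real.sqrt C := fun x => by
      rw [← Real.sqrt_sq_eq_abs]; exact Real.sqrt_le_sqrt (hσsq x)
    have hDx : MemLp (fun ω => xt ω - xbart ω) 2 P := hxt.sub hxbart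
    have hDn : MemLp (fun ω => ‖xt ω - xbart ω‖) 2 P := hDx.norm
    have haL2 : ∀ j : Fin d, MemLp (fun ω => (h (xt ω) t - h (xbart ω) t) j) 2 P := fun j => by
      refine (hDn.const_mul lam).of_le ((haAj j).aestronglyMeasurable) (ae_of_all _ fun ω => ?_)
      rw [Real.norm_eq_abs, Real.norm_eq_abs]
      calc |(h (xt ω) t - h (xbart ω) t) j| ≤ ‖h (xt ω) t - h (xbart ω) t‖ :=
            SCS.coord_le_norm _ _
        _ ≤ lam * ‖xt ω - xbart ω‖ := hcontr _ _
        _ ≤ |lam * ‖xt ω - xbart ω‖| := le_abs_self _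
    have hbL2 : ∀ j, MemLp (fun ω => σ (xt ω) t * εt ω j) 2 P := fun j =>
      SCS.memL2_bdd_mul hs1m (fun ω => hσb (xt ω)) (hnf j).1
    have hcL2 : ∀ j, MemLp (fun ω => σ (xbart ω) t * εt' ω j) 2 P := fun j =>
      SCS.memL2_bdd_mul hs2m (fun ω => hσb (xbart ω)) (hnf' j).1
    have hSN := h_indep_states.symm
    have key : ∀ j : Fin d,
        ∫ ω, ((h (xt ω) t - h (xbart ω) t) j
            + σ (xt ω) t * εt ω j - σ (xbart ω) t * εt' ω j) ^ 2 ∂P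
          = (∫ ω, ((h (xt ω) t - h (xbart ω) t) j) ^ 2 ∂P)
            + (∫ ω, σ (xt ω) t * σ (xt ω) t ∂P)
            + (∫ ω, σ (xbart ω) t * σ (xbart ω) t ∂P) := by
      intro j
      refine SCS.key (haL2 j) (hbL2 j) (hcL2 j) hs1m hs2m (me j).aestronglyMeasurable
        (me' j).aestronglyMeasurable (hnf j).2.1 (hnf' j).2.1
        (by simpa [sq] using (hnf j).2.2) (by simpa [sq] using (hnf' j).2.2)
        ?_ ?_ ?_ ?_ ?_ ?_
      · exact SCS.indep_comp hSN (φ := fun p => (h p.1 t - h p.2 t) j * σ p.1 t)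
          (ψ := fun p => p.1 j)
          ((((measurable_pi_apply j).comp (WithLp.measurable_ofLp 2 _)).comp mA).mul (hmeasσ.comp measurable_fst))
          (((measurable_pi_apply j).comp (WithLp.measurable_ofLp 2 _)).comp measurable_fst)
      · exact SCS.indep_comp hSN (φ := fun p => (h p.1 t - h p.2 t) j * σ p.2 t)
          (ψ := fun p => p.2 j)
          ((((measurable_pi_apply j).comp (WithLp.measurable_ofLp 2 _)).comp mA).mul (hmeasσ.comp measurable_snd))
          (((measurable_pi_apply j).comp (WithLp.measurable_ofLp 2 _)).comp measurable_snd)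
      · exact SCS.indep_comp hSN (φ := fun p => σ p.1 t * σ p.2 t)
          (ψ := fun p => p.1 j * p.2 j)
          ((hmeasσ.comp measurable_fst).mul (hmeasσ.comp measurable_snd))
          ((((measurable_pi_apply j).comp (WithLp.measurable_ofLp 2 _)).comp measurable_fst).mul
            (((measurable_pi_apply j).comp (WithLp.measurable_ofLp 2 _)).comp measurable_snd))
      · exact SCS.indep_comp hSN (φ := fun p => σ p.1 t * σ p.1 t)
          (ψ := fun p => p.1 j * p.1 j)
          ((hmeasσ.comp measurable_fst).mul (hmeasσ.comp measurable_fst))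
          ((((measurable_pi_apply j).comp (WithLp.measurable_ofLp 2 _)).comp measurable_fst).mul
            (((measurable_pi_apply j).comp (WithLp.measurable_ofLp 2 _)).comp measurable_fst))
      · exact SCS.indep_comp hSN (φ := fun p => σ p.2 t * σ p.2 t)
          (ψ := fun p => p.2 j * p.2 j)
          ((hmeasσ.comp measurable_snd).mul (hmeasσ.comp measurable_snd))
          ((((measurable_pi_apply j).comp (WithLp.measurable_ofLp 2 _)).comp measurable_snd).mul
            (((measurable_pi_apply j).comp (WithLp.measurable_ofLp 2 _)).comp measurable_snd))
      · exact h_noise_indep.indepFun (show (Sum.inl j : Fin d ⊕ Fin d) ≠ Sum.inr j by simp)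
    have hnorm : ∀ ω, ‖(h (xt ω) t + σ (xt ω) t • εt ω)
          - (h (xbart ω) t + σ (xbart ω) t • εt' ω)‖ ^ 2
        = ∑ j, ((h (xt ω) t - h (xbart ω) t) j
            + σ (xt ω) t * εt ω j - σ (xbart ω) t * εt' ω j) ^ 2 := by
      intro ω
      rw [EuclideanSpace.norm_eq, Real.sq_sqrt (Finset.sum_nonneg fun i _ => sq_nonneg _)]
      refine Finset.sum_congr rfl fun j _ => ?_
      simp only [PiLp.sub_apply, PiLp.add_apply, PiLp.smul_apply, smul_eq_mul,
        Real.norm_eq_abs, sq_abs]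
      ring
    have Fint : ∀ j : Fin d, Integrable (fun ω => ((h (xt ω) t - h (xbart ω) t) j
        + σ (xt ω) t * εt ω j - σ (xbart ω) t * εt' ω j) ^ 2) P := fun j =>
      (((haL2 j).add (hbL2 j)).sub (hcL2 j)).integrable_sq
    have hsplit : ∫ ω, ‖(h (xt ω) t + σ (xt ω) t • εt ω)
          - (h (xbart ω) t + σ (xbart ω) t • εt' ω)‖ ^ 2 ∂P
        = ∑ j : Fin d, ∫ ω, ((h (xt ω) t - h (xbart ω) t) j
            + σ (xt ω) t * εt ω j - σ (xbart ω) t * εt' ω j) ^ 2 ∂P := by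
      rw [integral_congr_ae (ae_of_all _ hnorm)]
      exact integral_finset_sum _ (fun j _ => Fint j)
    have hAsum : ∑ j : Fin d, ∫ ω, ((h (xt ω) t - h (xbart ω) t) j) ^ 2 ∂P
        = ∫ ω, ‖h (xt ω) t - h (xbart ω) t‖ ^ 2 ∂P := by
      rw [← integral_finset_sum _ (fun j _ => (haL2 j).integrable_sq)]
      refine integral_congr_ae (ae_of_all _ fun ω => ?_)
      simp only [EuclideanSpace.norm_eq, Real.norm_eq_abs, sq_abs]
      rw [Real.sq_sqrt (Finset.sum_nonneg fun i _ => sq_nonneg _)]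
    have hInt2 : Integrable (fun ω => lam ^ 2 * ‖xt ω - xbart ω‖ ^ 2) P :=
      hDn.integrable_sq.const_mul _
    have hptA : ∀ ω, ‖h (xt ω) t - h (xbart ω) t‖ ^ 2 ≤ lam ^ 2 * ‖xt ω - xbart ω‖ ^ 2 := by
      intro ω
      have h1 := hcontr (xt ω) (xbart ω)
      have h2 : (0:ℝ) ≤ ‖h (xt ω) t - h (xbart ω) t‖ := norm_nonneg _
      nlinarith [norm_nonneg (xt ω - xbart ω), mul_nonneg hlam0 (norm_nonneg (xt ω - xbart ω))]
    have hIntA : Integrable (fun ω => ‖h (xt ω) t - h (xbart ω) t‖ ^ 2) P := by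
      refine hInt2.mono' ((haA.norm.pow_const 2).aestronglyMeasurable)
        (ae_of_all _ fun ω => ?_)
      rw [Real.norm_eq_abs, abs_of_nonneg (sq_nonneg _)]
      exact hptA ω
    have hA_le : ∫ ω, ‖h (xt ω) t - h (xbart ω) t‖ ^ 2 ∂P
        ≤ lam ^ 2 * ∫ ω, ‖xt ω - xbart ω‖ ^ 2 ∂P := by
      rw [← integral_const_mul]
      exact integral_mono hIntA hInt2 hptA
    have hS : ∀ (x : Ω → EuclideanSpace ℝ (Fin d)),
        AEStronglyMeasurable (fun ω => σ (x ω) t) P →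
        (d:ℝ) * ∫ ω, σ (x ω) t * σ (x ω) t ∂P ≤ C := by
      intro x hxm
      have hI : Integrable (fun ω => σ (x ω) t * σ (x ω) t) P := by
        refine (integrable_const C).mono' (hxm.mul hxm) (ae_of_all _ fun ω => ?_)
        rw [Real.norm_eq_abs, abs_mul, abs_mul_abs_self, ← sq]
        exact hσsq _
      rw [← integral_const_mul]
      calc ∫ ω, (d:ℝ) * (σ (x ω) t * σ (x ω) t) ∂P ≤ ∫ _ω, C ∂P := by
            refine integral_mono (hI.const_mul _) (integrable_const C) (fun ω => ?_)
            have := hσ (x ω)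
            nlinarith [sq_nonneg (σ (x ω) t)]
        _ = C := by simp
    rw [hsplit]
    have hsum2 : ∑ j : Fin d, (∫ ω, ((h (xt ω) t - h (xbart ω) t) j) ^ 2 ∂P
            + (∫ ω, σ (xt ω) t * σ (xt ω) t ∂P)
            + (∫ ω, σ (xbart ω) t * σ (xbart ω) t ∂P))
        = (∑ j : Fin d, ∫ ω, ((h (xt ω) t - h (xbart ω) t) j) ^ 2 ∂P)
          + (d:ℝ) * (∫ ω, σ (xt ω) t * σ (xt ω) t ∂P)
          + (d:ℝ) * (∫ ω, σ (xbart ω) t * σ (xbart ω) t ∂P) := by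
      rw [Finset.sum_add_distrib, Finset.sum_add_distrib, Finset.sum_const, Finset.card_univ,
        Fintype.card_fin, nsmul_eq_mul, Finset.sum_const, Finset.card_univ,
        Fintype.card_fin, nsmul_eq_mul]
    calc ∑ j : Fin d, ∫ ω, ((h (xt ω) t - h (xbart ω) t) j
            + σ (xt ω) t * εt ω j - σ (xbart ω) t * εt' ω j) ^ 2 ∂P
        = (∑ j : Fin d, ∫ ω, ((h (xt ω) t - h (xbart ω) t) j) ^ 2 ∂P)
          + (d:ℝ) * (∫ ω, σ (xt ω) t * σ (xt ω) t ∂P)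
          + (d:ℝ) * (∫ ω, σ (xbart ω) t * σ (xbart ω) t ∂P) := by
          rw [← hsum2]; exact Finset.sum_congr rfl fun j _ => key j
      _ ≤ lam ^ 2 * (∫ ω, ‖xt ω - xbart ω‖ ^ 2 ∂P) + C + C := by
          have := hS xt hs1m
          have := hS xbart hs2m
          have := hA_le
          rw [hAsum]
          gcongr <;> linarith [hS xt hs1m, hS xbart hs2m, hA_le]
      _ ≤ lam ^ 2 * ∫ ω, ‖xt ω - xbart ω‖ ^ 2 ∂P + 2 * C := by linarith
end

section
/- Main denoising theorem: let x ∈ R^d be fixed, δ ∈ R^d, and suppose the recursion e_{t−1} ≤ λ_t²e_t + 2dβ_t holds with initial value e_{t*} ≤ ‖δ‖² + 2d, where ∏_{s=1}^{t*}λ_s² ≤ exp(−t*β_{t*}/2) and 0 < β_1 < ⋯ < β_{t*} < 1. If 2·log((2‖δ‖²+4d)/(μΔ)) ≤ t*β_{t*} ≤ μΔ/(4d) for constants μ > 0, Δ > 0, then e_0 ≤ μΔ; and if additionally E[‖x_0 − x‖²] ≤ Δ with e_0 = E[‖x̄_0 − x_0‖²], then E[‖x̄_0 − x‖²] ≤ 2(μ+1)Δ.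 -/
open MeasureTheory Finset

set_option maxHeartbeats 1000000 in
/-- Main denoising theorem: under the contraction recursion `e_{t−1} ≤ λ_t²·e_t + 2dβ_t`
with `e_{t*} ≤ ‖δ‖² + 2d`, the product bound `∏_{s=1}^{t*} λ_s² ≤ exp(−t*β_{t*}/2)`, a
strictly increasing schedule `0 < β_1 < ⋯ < β_{t*} < 1`, and the timestep condition
`2·log((2‖δ‖²+4d)/(μΔ)) ≤ t*β_{t*} ≤ μΔ/(4d)`, we get `e_0 ≤ μΔ`; and if additionally
`e_0 = E[‖x̄_0 − x_0‖²]` and `E[‖x_0 − x‖²] ≤ Δ`, then `E[‖x̄_0 − x‖²] ≤ 2(μ+1)Δ`. -/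
theorem avatar_main_denoising {Ω : Type*} [MeasureSpace Ω]
    (P : Measure Ω) [IsProbabilityMeasure P] {d : ℕ} (hd : 1 ≤ d)
    (δ x : EuclideanSpace ℝ (Fin d))
    (e lam β : ℕ → ℝ) (tstar : ℕ) (htstar : 1 ≤ tstar)
    (he : ∀ t, 0 ≤ e t)
    (hlam : ∀ t, 0 < lam t ∧ lam t < 1)
    (hβpos : ∀ s, 1 ≤ s → s ≤ tstar → 0 < β s)
    (hβlt : ∀ s, 1 ≤ s → s ≤ tstar → β s < 1)
    (hβmono : ∀ s t, 1 ≤ s → s < t → t ≤ tstar → β s < β t)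
    (hrec : ∀ t ∈ Icc 1 tstar, e (t - 1) ≤ (lam t) ^ 2 * e t + 2 * d * β t)
    (hinit : e tstar ≤ ‖δ‖ ^ 2 + 2 * d)
    (hprod : ∏ s ∈ Icc 1 tstar, (lam s) ^ 2 ≤
      Real.exp (-(tstar * β tstar) / 2))
    (μ Δ : ℝ) (hμ : 0 < μ) (hΔ : 0 < Δ)
    (hlow : 2 * Real.log ((2 * ‖δ‖ ^ 2 + 4 * d) / (μ * Δ)) ≤ tstar * β tstar)
    (hhigh : (tstar : ℝ) * β tstar ≤ μ * Δ / (4 * d))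
    (x0 xbar0 : Ω → EuclideanSpace ℝ (Fin d))
    (hx0 : MemLp x0 2 P) (hxbar0 : MemLp xbar0 2 P)
    (he0 : e 0 = ∫ ω, ‖xbar0 ω - x0 ω‖ ^ 2 ∂P)
    (hx0close : ∫ ω, ‖x0 ω - x‖ ^ 2 ∂P ≤ Δ) :
    e 0 ≤ μ * Δ ∧ ∫ ω, ‖xbar0 ω - x‖ ^ 2 ∂P ≤ 2 * (μ + 1) * Δ := by

  -- basic positivity facts
  have hd' : (1:ℝ) ≤ d := by exact_mod_cast hd
  have hdpos : (0:ℝ) < d := by linarith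
  have hA : (0:ℝ) < ‖δ‖ ^ 2 + 2 * d := by nlinarith [sq_nonneg ‖δ‖]
  have hβstar : 0 < β tstar := hβpos tstar htstar le_rfl
  -- unrolled recursion bound
  have key : ∀ n, n ≤ tstar → e (tstar - n) ≤
      (∏ s ∈ Icc (tstar - n + 1) tstar, lam s ^ 2) * e tstar + 2 * d * β tstar * n := by
    intro n
    induction n with
    | zero =>
      intro _
      have : Icc (tstar + 1) tstar = (∅ : Finset ℕ) := Finset.Icc_eq_empty (by omega)
      simp [this]
    | succ n ih =>
      intro hn
      have hn' : n ≤ tstar := Nat.le_of_succ_le hn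
      have ht1 : 1 ≤ tstar - n := by omega
      set t := tstar - n with htdef
      have htle : t ≤ tstar := by omega
      have hrec' := hrec t (by simp [Finset.mem_Icc]; omega)
      have hβle : β t ≤ β tstar := by
        rcases eq_or_lt_of_le htle with h | h
        · rw [h]
        · exact le_of_lt (hβmono t tstar ht1 h le_rfl)
      have hlam1 : 0 < lam t := (hlam t).1
      have hlam2 : lam t ^ 2 ≤ 1 := by nlinarith [(hlam t).2]
      have hlampos : (0:ℝ) < lam t ^ 2 := by positivity
      have hprodnn : (0:ℝ) ≤ ∏ s ∈ Icc (t + 1) tstar, lam s ^ 2 :=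
        Finset.prod_nonneg fun s _ => sq_nonneg _
      have ihn := ih hn'
      have hts : tstar - (n + 1) = t - 1 := by omega
      have hts2 : t - 1 + 1 = t := by omega
      rw [hts, hts2]
      have hsplit : ∏ s ∈ Icc t tstar, lam s ^ 2
          = lam t ^ 2 * ∏ s ∈ Icc (t + 1) tstar, lam s ^ 2 := by
        rw [← Finset.Ico_add_one_right_eq_Icc, ← Finset.Ico_add_one_right_eq_Icc]
        exact Finset.prod_eq_prod_Ico_succ_bot (by omega) _
      rw [hsplit]
      have h1 : lam t ^ 2 * e t ≤ lam t ^ 2 *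
          ((∏ s ∈ Icc (t + 1) tstar, lam s ^ 2) * e tstar + 2 * d * β tstar * n) :=
        mul_le_mul_of_nonneg_left ihn (le_of_lt hlampos)
      have hnn : (0:ℝ) ≤ 2 * d * β tstar * n := by positivity
      have hetnn := he tstar
      push_cast
      nlinarith [mul_le_mul_of_nonneg_right hlam2 hnn, hdpos, hβle]
  have hmain := key tstar le_rfl
  simp only [Nat.sub_self] at hmain
  -- bound the two pieces
  have hprodnn : (0:ℝ) ≤ ∏ s ∈ Icc (0 + 1) tstar, lam s ^ 2 :=
    Finset.prod_nonneg fun s _ => sq_nonneg _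
  have hy : (0:ℝ) < (2 * ‖δ‖ ^ 2 + 4 * d) / (μ * Δ) :=
    div_pos (by nlinarith) (mul_pos hμ hΔ)
  have hexp : Real.exp (-(tstar * β tstar) / 2) ≤ μ * Δ / (2 * ‖δ‖ ^ 2 + 4 * d) := by
    have hlog : Real.log ((2 * ‖δ‖ ^ 2 + 4 * d) / (μ * Δ)) ≤ tstar * β tstar / 2 := by
      linarith
    have h5 : Real.exp (-Real.log ((2 * ‖δ‖ ^ 2 + 4 * (d:ℝ)) / (μ * Δ)))
        = μ * Δ / (2 * ‖δ‖ ^ 2 + 4 * d) := by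
      rw [Real.exp_neg, Real.exp_log hy, inv_div]
    calc Real.exp (-(tstar * β tstar) / 2)
        = Real.exp (-(tstar * β tstar / 2)) := by ring_nf
      _ ≤ Real.exp (-Real.log ((2 * ‖δ‖ ^ 2 + 4 * (d:ℝ)) / (μ * Δ))) :=
          Real.exp_le_exp.mpr (neg_le_neg hlog)
      _ = μ * Δ / (2 * ‖δ‖ ^ 2 + 4 * d) := h5
  have hterm1 : (∏ s ∈ Icc (0 + 1) tstar, lam s ^ 2) * e tstar ≤ μ * Δ / 2 := by
    have h1 : (∏ s ∈ Icc (0 + 1) tstar, lam s ^ 2) * e tstar ≤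
        Real.exp (-(tstar * β tstar) / 2) * (‖δ‖ ^ 2 + 2 * d) := by
      have : (∏ s ∈ Icc 1 tstar, lam s ^ 2) ≤ Real.exp (-(tstar * β tstar) / 2) := hprod
      exact mul_le_mul (by simpa using this) hinit (he tstar) (Real.exp_pos _).le
    have h2 : Real.exp (-(tstar * β tstar) / 2) * (‖δ‖ ^ 2 + 2 * d) ≤
        (μ * Δ / (2 * ‖δ‖ ^ 2 + 4 * d)) * (‖δ‖ ^ 2 + 2 * d) :=
      mul_le_mul_of_nonneg_right hexp (by nlinarith)
    have h3 : (μ * Δ / (2 * ‖δ‖ ^ 2 + 4 * d)) * (‖δ‖ ^ 2 + 2 * d) = μ * Δ / 2 := by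
      field_simp
      ring
    linarith
  have hterm2 : 2 * d * β tstar * tstar ≤ μ * Δ / 2 := by
    have h4 : (0:ℝ) < 4 * d := by linarith
    have := mul_le_mul_of_nonneg_left hhigh (by positivity : (0:ℝ) ≤ 2 * d)
    have heq : 2 * d * (μ * Δ / (4 * d)) = μ * Δ / 2 := by
      field_simp
      ring
    have hc : 2 * (d:ℝ) * β tstar * tstar = 2 * d * ((tstar:ℝ) * β tstar) := by ring
    linarith
  have he0bound : e 0 ≤ μ * Δ := by
    linarith [hmain, hterm1, hterm2]
  refine ⟨he0bound, ?_⟩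
  -- second part: triangle inequality in L2
  have hf : MemLp (fun ω => xbar0 ω - x0 ω) 2 P := hxbar0.sub hx0
  have hg : MemLp (fun ω => x0 ω - x) 2 P := hx0.sub (memLp_const x)
  have hh : MemLp (fun ω => xbar0 ω - x) 2 P := hxbar0.sub (memLp_const x)
  have sqint : ∀ (f : Ω → EuclideanSpace ℝ (Fin d)), MemLp f 2 P →
      Integrable (fun ω => ‖f ω‖ ^ 2) P := by
    intro f hfm
    have := hfm.integrable_norm_rpow (by norm_num) (by norm_num)
    simp only [ENNReal.toReal_ofNat] at this
    convert this using 2 with ω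
    rw [← Real.rpow_natCast ‖f ω‖ 2]
    norm_num
  have I1 := sqint _ hf
  have I2 := sqint _ hg
  have I3 := sqint _ hh
  have hpt : ∀ ω, ‖xbar0 ω - x‖ ^ 2 ≤
      2 * ‖xbar0 ω - x0 ω‖ ^ 2 + 2 * ‖x0 ω - x‖ ^ 2 := by
    intro ω
    have htri : ‖xbar0 ω - x‖ ≤ ‖xbar0 ω - x0 ω‖ + ‖x0 ω - x‖ :=
      norm_sub_le_norm_sub_add_norm_sub _ _ _
    have h2 : ‖xbar0 ω - x‖ ^ 2 ≤ (‖xbar0 ω - x0 ω‖ + ‖x0 ω - x‖) ^ 2 :=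
      pow_le_pow_left₀ (norm_nonneg _) htri 2
    nlinarith [h2, sq_nonneg (‖xbar0 ω - x0 ω‖ - ‖x0 ω - x‖)]
  have hIsum : Integrable (fun ω => 2 * ‖xbar0 ω - x0 ω‖ ^ 2 + 2 * ‖x0 ω - x‖ ^ 2) P :=
    (I1.const_mul 2).add (I2.const_mul 2)
  calc ∫ ω, ‖xbar0 ω - x‖ ^ 2 ∂P
      ≤ ∫ ω, (2 * ‖xbar0 ω - x0 ω‖ ^ 2 + 2 * ‖x0 ω - x‖ ^ 2) ∂P :=
        integral_mono I3 hIsum hpt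
    _ = 2 * (∫ ω, ‖xbar0 ω - x0 ω‖ ^ 2 ∂P) + 2 * (∫ ω, ‖x0 ω - x‖ ^ 2 ∂P) := by
        rw [integral_add (I1.const_mul 2) (I2.const_mul 2),
          integral_const_mul, integral_const_mul]
    _ ≤ 2 * (μ * Δ) + 2 * Δ := by
        rw [← he0]
        have := mul_le_mul_of_nonneg_left hx0close (by norm_num : (0:ℝ) ≤ 2)
        have := mul_le_mul_of_nonneg_left he0bound (by norm_num : (0:ℝ) ≤ 2)
        linarith
    _ = 2 * (μ + 1) * Δ := by ring
end
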